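/- Let γ > 1, d ≥ 1, and s⁰ ∈ ℝ. Let U_k = (ρ_k, m_k, E_k) ∈ ℝ × ℝ^d × ℝ, k = 1, …, K, be states with ρ_k > 0 that each satisfy the entropy bound p(U_k) ≥ exp(s⁰) ρ_k^γ, where p(U) = (γ−1)(E − |m|²/(2ρ)). Then for any convex combination U = Σ_k α_k U_k (α_k ≥ 0, Σ_k α_k = 1), the combined state has positive density ρ(U) = Σ_k α_k ρ_k > 0 and satisfies p(U) ≥ exp(s⁰) ρ(U)^γ; equivalently, the physical entropy s(U) = ln p(U) − γ ln ρ(U) satisfies s(U) ≥ s⁰ (quasi-concavity of the entropy: convex combinations preserve a common entropy lower bound). -/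

import Mathlib

/-- The ideal-gas pressure `p(ρ, m, E) = (γ − 1)(E − |m|²/(2ρ))` of a
conservative Euler state `(ρ, m, E) ∈ ℝ × ℝ^d × ℝ`. -/
noncomputable def eulerPressure (γ : ℝ) {d : ℕ}
    (ρ : ℝ) (m : EuclideanSpace ℝ (Fin d)) (E : ℝ) : ℝ :=
  (γ - 1) * (E - ‖m‖ ^ 2 / (2 * ρ))

/-- quasi-concavity of the entropy: if every state
`U_k = (ρ_k, m_k, E_k)` with `ρ_k > 0` satisfies `p(U_k) ≥ exp(s⁰) ρ_k^γ`,
then any convex combination `U = Σ α_k U_k` has positive density and satisfies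
`p(U) ≥ exp(s⁰) ρ(U)^γ`, equivalently `s(U) = ln p(U) − γ ln ρ(U) ≥ s⁰`. -/
theorem entropy_quasi_concavity
    (γ : ℝ) (hγ : 1 < γ) (d K : ℕ) (hd : 1 ≤ d) (hK : 0 < K) (s0 : ℝ)
    (ρ : Fin K → ℝ) (m : Fin K → EuclideanSpace ℝ (Fin d)) (E : Fin K → ℝ)
    (hρ : ∀ k, 0 < ρ k)
    (hent : ∀ k, eulerPressure γ (ρ k) (m k) (E k) ≥ Real.exp s0 * ρ k ^ γ)
    (α : Fin K → ℝ) (hα : ∀ k, 0 ≤ α k) (hαsum : ∑ k, α k = 1) :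
    0 < ∑ k, α k * ρ k ∧
    eulerPressure γ (∑ k, α k * ρ k) (∑ k, α k • m k) (∑ k, α k * E k) ≥
      Real.exp s0 * (∑ k, α k * ρ k) ^ γ ∧
    Real.log (eulerPressure γ (∑ k, α k * ρ k) (∑ k, α k • m k) (∑ k, α k * E k)) -
        γ * Real.log (∑ k, α k * ρ k) ≥ s0 := by
  have hγ1 : (0:ℝ) < γ - 1 := by linarith
  -- positivity of the combined density
  have hexk : ∃ k ∈ Finset.univ, 0 < α k * ρ k := by
    by_contra h
    push_neg at h
    have : ∀ k ∈ (Finset.univ : Finset (Fin K)), α k = 0 := by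
      intro k _
      by_contra hk
      have hαk : 0 < α k := lt_of_le_of_ne (hα k) (Ne.symm hk)
      exact absurd (mul_pos hαk (hρ k)) (not_lt.2 (h k (Finset.mem_univ k)))
    have : ∑ k, α k = 0 := Finset.sum_eq_zero this
    rw [hαsum] at this; norm_num at this
  have hρbar : 0 < ∑ k, α k * ρ k :=
    Finset.sum_pos' (fun k _ => mul_nonneg (hα k) (hρ k).le) hexk
  -- Cauchy–Schwarz: ‖∑ α m‖² ≤ (∑ α ρ) * (∑ α ‖m‖²/ρ)
  have hCS : ‖∑ k, α k • m k‖ ^ 2 ≤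
      (∑ k, α k * ρ k) * ∑ k, α k * (‖m k‖ ^ 2 / ρ k) := by
    have h1 : ‖∑ k, α k • m k‖ ≤ ∑ k, α k * ‖m k‖ := by
      calc ‖∑ k, α k • m k‖ ≤ ∑ k, ‖α k • m k‖ := norm_sum_le _ _
        _ = ∑ k, α k * ‖m k‖ := by
            refine Finset.sum_congr rfl fun k _ => ?_
            rw [norm_smul, Real.norm_eq_abs, abs_of_nonneg (hα k)]
    have h2 : (∑ k, α k * ‖m k‖) ^ 2 ≤
        (∑ k, α k * ρ k) * ∑ k, α k * (‖m k‖ ^ 2 / ρ k) := by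
      refine Finset.sum_sq_le_sum_mul_sum_of_sq_eq_mul Finset.univ
        (fun k _ => mul_nonneg (hα k) (hρ k).le)
        (fun k _ => mul_nonneg (hα k) (div_nonneg (sq_nonneg _) (hρ k).le))
        (fun k _ => ?_)
      rw [mul_mul_mul_comm, mul_comm (ρ k), div_mul_cancel₀ _ (hρ k).ne']
      ring
    calc ‖∑ k, α k • m k‖ ^ 2 ≤ (∑ k, α k * ‖m k‖) ^ 2 := by
          apply sq_le_sq'
          · nlinarith [norm_nonneg (∑ k, α k • m k),
              Finset.sum_nonneg (fun k (_ : k ∈ Finset.univ) =>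
                mul_nonneg (hα k) (norm_nonneg (m k)))]
          · exact h1
      _ ≤ _ := h2
  -- convexity of the kinetic energy
  have hkin : ‖∑ k, α k • m k‖ ^ 2 / (2 * ∑ k, α k * ρ k) ≤
      ∑ k, α k * (‖m k‖ ^ 2 / (2 * ρ k)) := by
    have heq : ∑ k, α k * (‖m k‖ ^ 2 / (2 * ρ k)) =
        (∑ k, α k * (‖m k‖ ^ 2 / ρ k)) / 2 := by
      rw [Finset.sum_div]
      exact Finset.sum_congr rfl fun k _ => by ring
    rw [heq, div_le_div_iff₀ (by positivity) (by norm_num)]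
    nlinarith [hCS]
  -- Jensen for t ↦ t^γ
  have hjensen : (∑ k, α k * ρ k) ^ γ ≤ ∑ k, α k * ρ k ^ γ :=
    Real.rpow_arith_mean_le_arith_mean_rpow Finset.univ α ρ
      (fun k _ => hα k) hαsum (fun k _ => (hρ k).le) hγ.le
  -- main pressure bound
  have hmain : eulerPressure γ (∑ k, α k * ρ k) (∑ k, α k • m k) (∑ k, α k * E k) ≥
      Real.exp s0 * (∑ k, α k * ρ k) ^ γ := by
    have hk : ∀ k, E k - ‖m k‖ ^ 2 / (2 * ρ k) ≥ Real.exp s0 * ρ k ^ γ / (γ - 1) := by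
      intro k
      have := hent k
      unfold eulerPressure at this
      rw [ge_iff_le, div_le_iff₀ hγ1]
      linarith [this]
    have hsum : ∑ k, α k * (E k - ‖m k‖ ^ 2 / (2 * ρ k)) ≥
        ∑ k, α k * (Real.exp s0 * ρ k ^ γ / (γ - 1)) := by
      apply Finset.sum_le_sum
      intro k _
      exact mul_le_mul_of_nonneg_left (hk k) (hα k)
    unfold eulerPressure
    rw [ge_iff_le, ← div_le_iff₀' hγ1]
    calc Real.exp s0 * (∑ k, α k * ρ k) ^ γ / (γ - 1)
        ≤ Real.exp s0 * (∑ k, α k * ρ k ^ γ) / (γ - 1) := by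
          gcongr
      _ = ∑ k, α k * (Real.exp s0 * ρ k ^ γ / (γ - 1)) := by
          rw [Finset.mul_sum, Finset.sum_div]
          refine Finset.sum_congr rfl fun k _ => by ring
      _ ≤ ∑ k, α k * (E k - ‖m k‖ ^ 2 / (2 * ρ k)) := hsum
      _ = (∑ k, α k * E k) - ∑ k, α k * (‖m k‖ ^ 2 / (2 * ρ k)) := by
          rw [← Finset.sum_sub_distrib]
          refine Finset.sum_congr rfl fun k _ => by ring
      _ ≤ (∑ k, α k * E k) - ‖∑ k, α k • m k‖ ^ 2 / (2 * ∑ k, α k * ρ k) := by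
          linarith [hkin]
  refine ⟨hρbar, hmain, ?_⟩
  -- entropy bound
  have hppos : 0 < eulerPressure γ (∑ k, α k * ρ k) (∑ k, α k • m k) (∑ k, α k * E k) :=
    lt_of_lt_of_le (by positivity) hmain
  have hlog : Real.log (Real.exp s0 * (∑ k, α k * ρ k) ^ γ) ≤
      Real.log (eulerPressure γ (∑ k, α k * ρ k) (∑ k, α k • m k) (∑ k, α k * E k)) :=
    Real.log_le_log (by positivity) hmain
  rw [Real.log_mul (Real.exp_ne_zero s0) (by positivity), Real.log_exp,
    Real.log_rpow hρbar] at hlog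
  linarith
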